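/- Let f : G̃ → G be a harmonic morphism of graphs with G connected. Then the quantity Σ_{ṽ ∈ f⁻¹(v)} d_f(ṽ) is independent of the choice of vertex v ∈ V(G); moreover this common value (the global degree deg(f)) also equals Σ_{h̃ ∈ f⁻¹(h)} d_f(h̃) for every half-edge h of G, and equals Σ_{ẽ ∈ f⁻¹(e)} d_f(ẽ) for every edge e of G. -/

import Mathlib

open scoped Classical

structure HGraph where
  V : Type
  H : Type
  [fintV : Fintype V]
  [fintH : Fintype H]
  [decV : DecidableEq V]
  [decH : DecidableEq H]
  root : H → V
  inv : H → H
  inv_inv : ∀ h, inv (inv h) = h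
  inv_ne : ∀ h, inv h ≠ h

attribute [instance] HGraph.fintV HGraph.fintH HGraph.decV HGraph.decH

namespace HGraph

variable (G : HGraph)

/-- The setoid on half-edges whose classes are the edges. -/
def edgeSetoid : Setoid G.H where
  r h h' := h' = h ∨ h' = G.inv h
  iseqv := by
    refine ⟨fun h => Or.inl rfl, ?_, ?_⟩
    · rintro a b (rfl | rfl)
      · exact Or.inl rfl
      · exact Or.inr (G.inv_inv a).symm
    · rintro a b c (rfl | rfl) hbc
      · exact hbc
      · rcases hbc with rfl | rfl
        · exact Or.inr rfl
        · exact Or.inl (G.inv_inv a)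

instance edgeDec : DecidableRel G.edgeSetoid.r := fun _ _ => instDecidableOr

/-- The edges of a graph: orbits of the involution on half-edges. -/
def Edge := Quotient G.edgeSetoid

instance : Fintype G.Edge := @Quotient.fintype _ _ G.edgeSetoid G.edgeDec
instance : DecidableEq G.Edge := @Quotient.decidableEq _ G.edgeSetoid G.edgeDec

/-- The edge underlying a half-edge. -/
def edge (h : G.H) : G.Edge := Quotient.mk G.edgeSetoid h

lemma edge_inv (h : G.H) : G.edge (G.inv h) = G.edge h :=
  Quotient.sound (Or.inr (G.inv_inv h).symm)

/-- The valence of a vertex: the number of half-edges rooted at it. -/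
def val (v : G.V) : ℕ := (Finset.univ.filter fun h => G.root h = v).card

/-- Two vertices are adjacent through an edge belonging to `S`. -/
def adjOn (S : Finset G.Edge) (v w : G.V) : Prop :=
  ∃ h, G.edge h ∈ S ∧ G.root h = v ∧ G.root (G.inv h) = w

/-- The spanning subgraph with edge set `S` is connected. -/
def ConnectedOn (S : Finset G.Edge) : Prop :=
  ∀ v w : G.V, Relation.ReflTransGen (G.adjOn S) v w

/-- The graph is connected. -/
def Connected : Prop := Nonempty G.V ∧ G.ConnectedOn Finset.univ

/-- Euler characteristic of a vertex, for a genus function `gV`. -/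
def chiZ (gV : G.V → ℤ) (v : G.V) : ℤ := 2 - 2 * gV v - G.val v

/-- The genus of a (connected) weighted graph. -/
def genusZ (gV : G.V → ℤ) : ℤ :=
  (Fintype.card G.Edge : ℤ) - Fintype.card G.V + 1 + ∑ v, gV v

/-- The number of connected components of the spanning subgraph with edge set `S`. -/
noncomputable def ncomp (S : Finset G.Edge) : ℕ :=
  Nat.card (Quotient (Relation.EqvGen.setoid (G.adjOn S)))

end HGraph

/-- A harmonic morphism of graphs: a graph morphism together with local degrees. -/
structure HarmonicTo (Gt G : HGraph) where
  fV : Gt.V → G.V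
  fH : Gt.H → G.H
  root_comm : ∀ h, G.root (fH h) = fV (Gt.root h)
  inv_comm : ∀ h, fH (Gt.inv h) = G.inv (fH h)
  dV : Gt.V → ℕ
  dH : Gt.H → ℕ
  dV_pos : ∀ v, 0 < dV v
  dH_pos : ∀ h, 0 < dH h
  dH_inv : ∀ h, dH (Gt.inv h) = dH h
  harm : ∀ (w : Gt.V) (h : G.H), G.root h = fV w →
    dV w = ∑ x ∈ Finset.univ.filter (fun x => Gt.root x = w ∧ fH x = h), dH x

namespace HarmonicTo

variable {Gt G : HGraph} (f : HarmonicTo Gt G)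

/-- The induced map on edges. -/
def fE : Gt.Edge → G.Edge :=
  Quotient.lift (fun h => G.edge (f.fH h)) (by
    rintro a b (rfl | rfl)
    · rfl
    · show G.edge (f.fH a) = G.edge (f.fH (Gt.inv a))
      rw [f.inv_comm]
      exact (G.edge_inv _).symm)

/-- The local degree of an edge. -/
def dE : Gt.Edge → ℕ :=
  Quotient.lift f.dH (by
    rintro a b (rfl | rfl)
    · rfl
    · exact (f.dH_inv a).symm)

/-- The ramification degree at a vertex of the source. -/
def Ram (gVt : Gt.V → ℤ) (gV : G.V → ℤ) (w : Gt.V) : ℤ :=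
  (f.dV w : ℤ) * G.chiZ gV (f.fV w) - Gt.chiZ gVt w

end HarmonicTo

/-- For a harmonic morphism `f : G̃ → G` with `G` connected, the sum of the
local degrees over the preimages of a vertex is independent of the vertex; this common value,
the global degree, also equals the sum of the local degrees over the preimages of any half-edge
and over the preimages of any edge of `G`. -/
theorem globalDegree_welldefined (Gt G : HGraph) (f : HarmonicTo Gt G) (hconn : G.Connected) :
    ∃ D : ℕ,
      (∀ v : G.V, ∑ w ∈ Finset.univ.filter (fun w => f.fV w = v), f.dV w = D) ∧
      (∀ h : G.H, ∑ x ∈ Finset.univ.filter (fun x => f.fH x = h), f.dH x = D) ∧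
      (∀ e : G.Edge, ∑ a ∈ Finset.univ.filter (fun a => f.fE a = e), f.dE a = D) := by
  classical
  set S : G.V → ℕ := fun v => ∑ w ∈ Finset.univ.filter (fun w => f.fV w = v), f.dV w with hS
  set T : G.H → ℕ := fun h => ∑ x ∈ Finset.univ.filter (fun x => f.fH x = h), f.dH x with hT
  have hA : ∀ h : G.H, T h = S (G.root h) := by
    intro h
    have hfib := Finset.sum_fiberwise_of_maps_to
      (s := Finset.univ.filter (fun x => f.fH x = h)) (g := Gt.root)
      (t := Finset.univ) (fun x _ => Finset.mem_univ _) f.dH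
    show (∑ x ∈ Finset.univ.filter (fun x => f.fH x = h), f.dH x) = S (G.root h)
    rw [← hfib]
    have step : ∀ w : Gt.V,
        ∑ x ∈ (Finset.univ.filter (fun x => f.fH x = h)).filter (fun x => Gt.root x = w), f.dH x
          = if f.fV w = G.root h then f.dV w else 0 := by
      intro w
      by_cases hw : f.fV w = G.root h
      · rw [if_pos hw, f.harm w h hw.symm]
        apply Finset.sum_congr
        · ext x
          simp only [Finset.mem_filter, Finset.mem_univ, true_and]
          tauto
        · intros; rfl
      · rw [if_neg hw]
        apply Finset.sum_eq_zero
        intro x hx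
        simp only [Finset.mem_filter, Finset.mem_univ, true_and] at hx
        exact absurd (by rw [← hx.2, ← hx.1, f.root_comm] : f.fV w = G.root h) hw
    rw [Finset.sum_congr rfl (fun w _ => step w)]
    exact (Finset.sum_filter _ _).symm
  have hB : ∀ h : G.H, T (G.inv h) = T h := by
    intro h
    show (∑ x ∈ Finset.univ.filter (fun x => f.fH x = G.inv h), f.dH x)
        = ∑ x ∈ Finset.univ.filter (fun x => f.fH x = h), f.dH x
    refine Finset.sum_nbij' (fun x => Gt.inv x) (fun x => Gt.inv x) ?_ ?_ ?_ ?_ ?_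
    · intro x hx
      simp only [Finset.mem_filter, Finset.mem_univ, true_and] at hx ⊢
      rw [f.inv_comm, hx]
      exact G.inv_inv h
    · intro x hx
      simp only [Finset.mem_filter, Finset.mem_univ, true_and] at hx ⊢
      rw [f.inv_comm, hx]
    · intro x _; exact Gt.inv_inv x
    · intro x _; exact Gt.inv_inv x
    · intro x _; exact (f.dH_inv x).symm
  obtain ⟨⟨v0⟩, hc⟩ := hconn
  have key : ∀ a b : G.V, G.adjOn Finset.univ a b → S a = S b := by
    rintro a b ⟨h, _, rfl, rfl⟩
    rw [← hA h, ← hB h, hA]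
  have Sconst : ∀ v : G.V, S v = S v0 := by
    intro v
    have hr := hc v v0
    induction hr with
    | refl => rfl
    | tail _ hab ih => exact ih.trans (key _ _ hab)
  refine ⟨S v0, fun v => Sconst v, ?_, ?_⟩
  · intro h
    show T h = S v0
    rw [hA h]; exact Sconst _
  · intro e
    induction e using Quotient.inductionOn with
    | h h =>
      have hEe : ∑ a ∈ Finset.univ.filter (fun a => f.fE a = Quotient.mk G.edgeSetoid h), f.dE a
          = T h := by
        show _ = ∑ x ∈ Finset.univ.filter (fun x => f.fH x = h), f.dH x
        refine (Finset.sum_nbij (fun x => Gt.edge x) ?_ ?_ ?_ ?_).symm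
        · intro x hx
          simp only [Finset.mem_filter, Finset.mem_univ, true_and] at hx ⊢
          show G.edge (f.fH x) = Quotient.mk G.edgeSetoid h
          rw [hx]; rfl
        · intro x hx y hy hxy
          simp only [Finset.mem_coe, Finset.mem_filter, Finset.mem_univ, true_and] at hx hy
          have hr : (Gt.edgeSetoid).r x y := Quotient.exact hxy
          rcases hr with h1 | h1
          · exact h1.symm
          · exfalso
            have hcon : f.fH y = G.inv (f.fH x) := by rw [h1, f.inv_comm]
            rw [hx, hy] at hcon
            exact G.inv_ne _ hcon.symm
        · intro a ha
          simp only [Finset.coe_filter, Finset.mem_univ, true_and, Set.mem_image,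
            Set.mem_setOf_eq] at ha ⊢
          induction a using Quotient.inductionOn with
          | h x =>
            have hx : (G.edgeSetoid).r (f.fH x) h := Quotient.exact ha
            rcases hx with h1 | h1
            · exact ⟨x, h1.symm, rfl⟩
            · refine ⟨Gt.inv x, ?_, ?_⟩
              · rw [f.inv_comm, ← h1]
              · exact Quotient.sound (Or.inr (Gt.inv_inv x).symm)
        · intros; rfl
      convert hEe.trans ((hA h).trans (Sconst _))
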